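/- arXiv:1702.07626 — 2 statements merged into one kernel-verified Lean document; each statement's English description precedes it below -/
import Mathlib

section
/- Let d ≥ 3 and 1 ≤ p, r ≤ ∞. Suppose that for a fixed constant C₀ > 0 the estimate ‖A_C f‖_{L^r(C,σ)} ≤ C₀ ‖f‖_{L^p(F_q^d, dx)} holds for all functions f : F_q^d → ℂ and all sufficiently large powers q of odd primes, and suppose that the cone C does not contain any F_q-linear subspace H of F_q^d with |H| > q^{(d−1)/2}. Then the point (1/p, 1/r) ∈ ℝ² must lie in the convex hull of the four points (0,0), (0,1), ((d−1)/d, 1), and P₀ = ((d−1)/d, 1/d). -/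
open Finset MeasureTheory
open scoped ENNReal

namespace ConeFF

variable (F : Type) [Field F] [Fintype F] [DecidableEq F]

/-- The cone `C = {x ∈ F^d : x₁² + ⋯ + x_{d-2}² = x_{d-1} x_d}` (0-indexed). -/
def cone (d : ℕ) (hd : 3 ≤ d) : Finset (Fin d → F) :=
  Finset.univ.filter fun x =>
    (∑ i ∈ Finset.univ.filter (fun i : Fin d => (i : ℕ) < d - 2), x i ^ 2) =
      x ⟨d - 2, by omega⟩ * x ⟨d - 1, by omega⟩

/-- The quadratic form `Γ(ξ) = ξ₁² + ⋯ + ξ_{d-2}² − 4 ξ_{d-1} ξ_d`. -/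
def gammaForm (d : ℕ) (hd : 3 ≤ d) (ξ : Fin d → F) : F :=
  (∑ i ∈ Finset.univ.filter (fun i : Fin d => (i : ℕ) < d - 2), ξ i ^ 2) -
    4 * ξ ⟨d - 2, by omega⟩ * ξ ⟨d - 1, by omega⟩

/-- Indicator function of a finite set, with values in `ℂ`. -/
def ind {V : Type} [DecidableEq V] (E : Finset V) : V → ℂ :=
  fun x => if x ∈ E then 1 else 0

/-- Convolution with respect to the normalized counting measure `dx`. -/
noncomputable def conv (d : ℕ) (f g : (Fin d → F) → ℂ) : (Fin d → F) → ℂ :=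
  fun y => ((Fintype.card F : ℂ) ^ d)⁻¹ * ∑ x, f (y - x) * g x

/-- The averaging operator `f ∗ σ` over the cone. -/
noncomputable def avg (d : ℕ) (hd : 3 ≤ d) (f : (Fin d → F) → ℂ) : (Fin d → F) → ℂ :=
  fun y => ((cone F d hd).card : ℂ)⁻¹ * ∑ x ∈ cone F d hd, f (y - x)

/-- Inverse Fourier transform `f^∨(m) = q^{-d} ∑_x χ(m·x) f(x)`. -/
noncomputable def invFT (d : ℕ) (χ : AddChar F ℂ) (f : (Fin d → F) → ℂ)
    (m : Fin d → F) : ℂ :=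
  ((Fintype.card F : ℂ) ^ d)⁻¹ * ∑ x, χ (dotProduct m x) * f x

/-- Fourier transform `ĝ(x) = ∑_m χ(−m·x) g(m)` on the dual space. -/
noncomputable def ft (d : ℕ) (χ : AddChar F ℂ) (g : (Fin d → F) → ℂ)
    (x : Fin d → F) : ℂ :=
  ∑ m, χ (-(dotProduct m x)) * g m

/-- `σ^∨(m) = |C|⁻¹ ∑_{x∈C} χ(m·x)`. -/
noncomputable def sigmaInv (d : ℕ) (hd : 3 ≤ d) (χ : AddChar F ℂ) (m : Fin d → F) : ℂ :=
  ((cone F d hd).card : ℂ)⁻¹ * ∑ x ∈ cone F d hd, χ (dotProduct m x)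

/-- `K(m) = σ^∨(m) − δ₀(m)`. -/
noncomputable def Kfun (d : ℕ) (hd : 3 ≤ d) (χ : AddChar F ℂ) (m : Fin d → F) : ℂ :=
  sigmaInv F d hd χ m - if m = 0 then 1 else 0

/-- `M(m) = C^∨(m) − (|C|/q^d) δ₀(m)`. -/
noncomputable def Mfun (d : ℕ) (hd : 3 ≤ d) (χ : AddChar F ℂ) (m : Fin d → F) : ℂ :=
  invFT F d χ (ind (cone F d hd)) m -
    if m = 0 then ((cone F d hd).card : ℂ) / (Fintype.card F : ℂ) ^ d else 0

/-- `L^p(C,σ)` norm (for finite `p`), with `σ` the normalized surface measure. -/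
noncomputable def coneLpNorm (d : ℕ) (hd : 3 ≤ d) (p : ℝ) (h : (Fin d → F) → ℂ) : ℝ :=
  (((cone F d hd).card : ℝ)⁻¹ * ∑ x ∈ cone F d hd, ‖h x‖ ^ p) ^ (1 / p)

/-- `L^p(F_q^d, dx)` norm (for finite `p`), with `dx` the normalized counting measure. -/
noncomputable def spaceLpNorm (d : ℕ) (p : ℝ) (f : (Fin d → F) → ℂ) : ℝ :=
  (((Fintype.card F : ℝ) ^ d)⁻¹ * ∑ x, ‖f x‖ ^ p) ^ (1 / p)

end ConeFF

instance (V : Type) (d : ℕ) : MeasurableSpace (Fin d → V) := ⊤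

namespace ConeFF

variable (F : Type) [Field F] [Fintype F] [DecidableEq F]

/-- The normalized counting measure `dx` on `F_q^d`. -/
noncomputable def dxMeasure (d : ℕ) : Measure (Fin d → F) :=
  ((Fintype.card F : ℝ≥0∞) ^ d)⁻¹ • Measure.count

/-- The normalized surface measure `σ` on the cone. -/
noncomputable def coneMeasure (d : ℕ) (hd : 3 ≤ d) : Measure (Fin d → F) :=
  ((cone F d hd).card : ℝ≥0∞)⁻¹ •
    Measure.count.restrict (↑(cone F d hd) : Set (Fin d → F))

-- ### auxiliary lemmas ###

lemma zero_mem_cone (d : ℕ) (hd : 3 ≤ d) : 0 ∈ cone F d hd := by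
  simp [cone]

lemma neg_mem_cone (d : ℕ) (hd : 3 ≤ d) {x : Fin d → F} (hx : x ∈ cone F d hd) :
    -x ∈ cone F d hd := by
  simp only [cone, Finset.mem_filter, Finset.mem_univ, true_and, Pi.neg_apply] at hx ⊢
  simpa [neg_sq, neg_mul_neg] using hx

lemma cone_card_pos (d : ℕ) (hd : 3 ≤ d) : 0 < (cone F d hd).card :=
  Finset.card_pos.2 ⟨0, zero_mem_cone F d hd⟩

lemma cone_card_le (d : ℕ) (hd : 3 ≤ d) (hq : 2 ≤ Fintype.card F) :
    (cone F d hd).card ≤ 2 * Fintype.card F ^ (d - 1) := by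
  have hdd : d - 1 = (d - 2) + 1 := by omega
  set q := Fintype.card F with hqdef
  set a : Fin d := ⟨d - 2, by omega⟩ with ha
  set b : Fin d := ⟨d - 1, by omega⟩ with hb
  set i0 : Fin d := ⟨0, by omega⟩ with hi0
  have hab : a ≠ b := by simp [ha, hb, Fin.ext_iff]; omega
  have hi0a : i0 ≠ a := by simp [hi0, ha, Fin.ext_iff]; omega
  have hi0b : i0 ≠ b := by simp [hi0, hb, Fin.ext_iff]; omega
  have hmemS : ∀ i : Fin d, i ∈ Finset.univ.filter (fun i : Fin d => (i : ℕ) < d - 2) → i ≠ a := by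
    intro i hi
    simp only [Finset.mem_filter, Finset.mem_univ, true_and] at hi
    simp [ha, Fin.ext_iff]; omega
  have hi0S : i0 ∈ Finset.univ.filter (fun i : Fin d => (i : ℕ) < d - 2) := by
    simp [hi0]; omega
  -- split
  have hsplit : ((cone F d hd).filter (fun x => x b = 0)).card
      + ((cone F d hd).filter (fun x => ¬ x b = 0)).card = (cone F d hd).card :=
    Finset.card_filter_add_card_filter_not _
  -- part 1 : x b ≠ 0
  have hpart1 : ((cone F d hd).filter (fun x => ¬ x b = 0)).card ≤ q ^ (d - 1) := by
    have hcard : (Fintype.piFinset (fun i : Fin d => if i = a then ({0} : Finset F) else Finset.univ)).card = q ^ (d - 1) := by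
      rw [Fintype.card_piFinset, ← Finset.mul_prod_erase Finset.univ _ (Finset.mem_univ a),
        if_pos rfl, Finset.card_singleton, one_mul]
      calc (∏ i ∈ Finset.univ.erase a, (if i = a then ({0} : Finset F) else Finset.univ).card)
          = ∏ _i ∈ Finset.univ.erase a, q :=
            Finset.prod_congr rfl (fun i hi => by
              rw [if_neg (Finset.mem_erase.1 hi).1, Finset.card_univ])
        _ = q ^ (d - 1) := by
            rw [Finset.prod_const, Finset.card_erase_of_mem (Finset.mem_univ a),
              Finset.card_univ, Fintype.card_fin]
    rw [← hcard]
    apply Finset.card_le_card_of_injOn (fun x => Function.update x a 0)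
    · intro x hx
      rw [Finset.mem_coe, Fintype.mem_piFinset]
      intro i
      by_cases hia : i = a
      · subst hia; simp
      · beta_reduce
        rw [Function.update_of_ne hia, if_neg hia]
        exact Finset.mem_univ _
    · intro x hx x' hx' hEq
      simp only [Finset.mem_coe, Finset.mem_filter] at hx hx'
      obtain ⟨hxC, hxb⟩ := hx
      obtain ⟨hx'C, hx'b⟩ := hx'
      simp only [cone, Finset.mem_filter, Finset.mem_univ, true_and] at hxC hx'C
      have hoff : ∀ i, i ≠ a → x i = x' i := by
        intro i hia
        have h : Function.update x a 0 i = Function.update x' a 0 i := congrFun hEq i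
        rwa [Function.update_of_ne hia, Function.update_of_ne hia] at h
      have hsum : (∑ i ∈ Finset.univ.filter (fun i : Fin d => (i : ℕ) < d - 2), x i ^ 2)
          = ∑ i ∈ Finset.univ.filter (fun i : Fin d => (i : ℕ) < d - 2), x' i ^ 2 :=
        Finset.sum_congr rfl (fun i hi => by rw [hoff i (hmemS i hi)])
      have hbb : x b = x' b := hoff b (Ne.symm hab)
      have haa : x a = x' a := by
        have h1 : x a * x b = x' a * x b := by
          rw [← hxC, hbb, ← hx'C, hsum]
        exact mul_right_cancel₀ hxb h1
      funext i
      by_cases hia : i = a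
      · subst hia; exact haa
      · exact hoff i hia
  -- part 2 : x b = 0
  have hpart2 : ((cone F d hd).filter (fun x => x b = 0)).card ≤ 2 * q ^ (d - 2) := by
    set s₂ := (cone F d hd).filter (fun x => x b = 0) with hs₂
    have himage : (s₂.image (fun x => Function.update x i0 0)).card ≤ q ^ (d - 2) := by
      have hcard : (Fintype.piFinset (fun i : Fin d => if i = i0 ∨ i = b then ({0} : Finset F) else Finset.univ)).card = q ^ (d - 2) := by
        rw [Fintype.card_piFinset, ← Finset.mul_prod_erase Finset.univ _ (Finset.mem_univ i0),
          if_pos (Or.inl rfl), Finset.card_singleton, one_mul,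
          ← Finset.mul_prod_erase _ _ (Finset.mem_erase.2 ⟨Ne.symm hi0b, Finset.mem_univ b⟩),
          if_pos (Or.inr rfl), Finset.card_singleton, one_mul]
        calc (∏ i ∈ (Finset.univ.erase i0).erase b,
              (if i = i0 ∨ i = b then ({0} : Finset F) else Finset.univ).card)
            = ∏ _i ∈ (Finset.univ.erase i0).erase b, q :=
              Finset.prod_congr rfl (fun i hi => by
                have h1 := Finset.mem_erase.1 hi
                have h2 := Finset.mem_erase.1 h1.2
                rw [if_neg (by push_neg; exact ⟨h2.1, h1.1⟩), Finset.card_univ])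
          _ = q ^ (d - 2) := by
              rw [Finset.prod_const, Finset.card_erase_of_mem
                (Finset.mem_erase.2 ⟨Ne.symm hi0b, Finset.mem_univ b⟩),
                Finset.card_erase_of_mem (Finset.mem_univ i0), Finset.card_univ, Fintype.card_fin]
              congr 1
      rw [← hcard]
      apply Finset.card_le_card
      intro y hy
      rw [Finset.mem_image] at hy
      obtain ⟨x, hx, rfl⟩ := hy
      rw [Fintype.mem_piFinset]
      intro i
      by_cases hii : i = i0
      · subst hii; simp
      · rw [Function.update_of_ne hii]
        by_cases hib : i = b
        · subst hib
          rw [if_pos (Or.inr rfl)]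
          simp only [hs₂, Finset.mem_filter] at hx
          simp [hx.2]
        · rw [if_neg (by push_neg; exact ⟨hii, hib⟩)]
          exact Finset.mem_univ _
    have hfiber : ∀ c ∈ s₂.image (fun x => Function.update x i0 0),
        (s₂.filter (fun x => Function.update x i0 0 = c)).card ≤ 2 := by
      intro c hc
      rw [Finset.mem_image] at hc
      obtain ⟨v, hv, hvc⟩ := hc
      have hsub : s₂.filter (fun x => Function.update x i0 0 = c)
          ⊆ insert v {Function.update v i0 (-v i0)} := by
        intro x hx
        rw [Finset.mem_filter] at hx
        obtain ⟨hxs, hxc⟩ := hx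
        have hEq : Function.update x i0 0 = Function.update v i0 0 := by rw [hxc, ← hvc]
        have hoff : ∀ i, i ≠ i0 → x i = v i := by
          intro i hii
          have h : Function.update x i0 0 i = Function.update v i0 0 i := congrFun hEq i
          rwa [Function.update_of_ne hii, Function.update_of_ne hii] at h
        simp only [hs₂, Finset.mem_filter] at hxs hv
        obtain ⟨hxC, hxb⟩ := hxs
        obtain ⟨hvC, hvb⟩ := hv
        simp only [cone, Finset.mem_filter, Finset.mem_univ, true_and] at hxC hvC
        rw [hxb, mul_zero] at hxC
        rw [hvb, mul_zero] at hvC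
        rw [← Finset.add_sum_erase _ _ hi0S] at hxC hvC
        have htail : (∑ i ∈ (Finset.univ.filter (fun i : Fin d => (i : ℕ) < d - 2)).erase i0, x i ^ 2)
            = ∑ i ∈ (Finset.univ.filter (fun i : Fin d => (i : ℕ) < d - 2)).erase i0, v i ^ 2 :=
          Finset.sum_congr rfl (fun i hi => by rw [hoff i (Finset.mem_erase.1 hi).1])
        have hsq : x i0 ^ 2 = v i0 ^ 2 := by
          rw [htail] at hxC
          linear_combination hxC - hvC
        have hfac : (x i0 - v i0) * (x i0 + v i0) = 0 := by linear_combination hsq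
        rcases mul_eq_zero.1 hfac with h | h
        · have hxv : x = v := by
            funext i
            by_cases hii : i = i0
            · subst hii; exact sub_eq_zero.1 h
            · exact hoff i hii
          rw [hxv]
          exact Finset.mem_insert_self _ _
        · have hxv : x = Function.update v i0 (-v i0) := by
            funext i
            by_cases hii : i = i0
            · subst hii
              rw [Function.update_self]
              exact eq_neg_of_add_eq_zero_left h
            · rw [Function.update_of_ne hii]
              exact hoff i hii
          rw [hxv]
          exact Finset.mem_insert_of_mem (Finset.mem_singleton_self _)
      calc (s₂.filter (fun x => Function.update x i0 0 = c)).card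
          ≤ (insert v ({Function.update v i0 (-v i0)} : Finset (Fin d → F))).card :=
            Finset.card_le_card hsub
        _ ≤ 2 := le_trans (Finset.card_insert_le _ _) (by simp)
    calc s₂.card ≤ 2 * (s₂.image (fun x => Function.update x i0 0)).card :=
          Finset.card_le_mul_card_image s₂ 2 hfiber
      _ ≤ 2 * q ^ (d - 2) := Nat.mul_le_mul_left 2 himage
  have hq1 : q ^ (d - 1) = q ^ (d - 2) * q := by
    rw [hdd, pow_succ]
  have h2 : 2 * q ^ (d - 2) ≤ q ^ (d - 1) := by
    rw [hq1, mul_comm]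
    exact Nat.mul_le_mul_left _ hq
  linarith

lemma avg_delta (d : ℕ) (hd : 3 ≤ d) {y : Fin d → F} (hy : y ∈ cone F d hd) :
    avg F d hd (ind {0}) y = ((cone F d hd).card : ℂ)⁻¹ := by
  have : ∀ x ∈ cone F d hd, ind ({0} : Finset (Fin d → F)) (y - x)
      = if y = x then 1 else 0 := by
    intro x _
    simp [ind, sub_eq_zero]
  rw [avg, Finset.sum_congr rfl this, Finset.sum_ite_eq, if_pos hy, mul_one]

lemma avg_indC_zero (d : ℕ) (hd : 3 ≤ d) :
    avg F d hd (ind (cone F d hd)) 0 = 1 := by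
  have h1 : ∀ x ∈ cone F d hd, ind (cone F d hd) (0 - x) = 1 := by
    intro x hx
    simp only [zero_sub, ind, if_pos (neg_mem_cone F d hd hx)]
  rw [avg, Finset.sum_congr rfl h1, Finset.sum_const, nsmul_eq_mul, mul_one,
    inv_mul_cancel₀]
  exact Nat.cast_ne_zero.2 (cone_card_pos F d hd).ne'


instance (V : Type) (d : ℕ) : MeasurableSingletonClass (Fin d → V) :=
  ⟨fun _ => MeasurableSpace.measurableSet_top⟩

lemma meas_top {V : Type} {d : ℕ} (s : Set (Fin d → V)) : MeasurableSet s :=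
  MeasurableSpace.measurableSet_top

lemma dx_finset (d : ℕ) (E : Finset (Fin d → F)) :
    dxMeasure F d (↑E : Set (Fin d → F))
      = ((Fintype.card F : ℝ≥0∞) ^ d)⁻¹ * E.card := by
  rw [dxMeasure, Measure.smul_apply, Measure.count_apply_finset, smul_eq_mul]

lemma cone_meas_univ (d : ℕ) (hd : 3 ≤ d) :
    coneMeasure F d hd Set.univ = 1 := by
  rw [coneMeasure, Measure.smul_apply, Measure.restrict_apply (meas_top _),
    Set.univ_inter, Measure.count_apply_finset, smul_eq_mul,
    ENNReal.inv_mul_cancel]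
  · exact Nat.cast_ne_zero.2 (cone_card_pos F d hd).ne'
  · exact ENNReal.natCast_ne_top _

lemma cone_meas_singleton_zero (d : ℕ) (hd : 3 ≤ d) :
    coneMeasure F d hd {0} = (((cone F d hd).card : ℝ≥0∞))⁻¹ := by
  rw [coneMeasure, Measure.smul_apply, Measure.restrict_apply (meas_top _)]
  have : ({0} : Set (Fin d → F)) ∩ ↑(cone F d hd) = {0} := by
    rw [Set.inter_eq_left]
    simpa using zero_mem_cone F d hd
  rw [this, Measure.count_singleton, smul_eq_mul, mul_one]

lemma cone_meas_ae (d : ℕ) (hd : 3 ≤ d) :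
    ∀ᵐ y ∂(coneMeasure F d hd), y ∈ cone F d hd := by
  rw [MeasureTheory.ae_iff]
  have h0 : {y : Fin d → F | ¬ y ∈ cone F d hd} = (↑(cone F d hd) : Set (Fin d → F))ᶜ := by
    ext y; simp
  rw [h0, coneMeasure, Measure.smul_apply, Measure.restrict_apply (meas_top _),
    Set.compl_inter_self, measure_empty, smul_eq_mul, mul_zero]


end ConeFF

section LpLemmas
open MeasureTheory
variable {α : Type} [MeasurableSpace α] [MeasurableSingletonClass α]

lemma point_le_eLpNorm (μ : Measure α) (f : α → ℂ) (a : α) (r : ℝ≥0∞)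
    (hr : 1 ≤ r) (h0 : μ {a} ≠ 0) (hfin : μ {a} ≠ ∞) :
    (‖f a‖₊ : ℝ≥0∞) * μ {a} ^ (r⁻¹).toReal ≤ eLpNorm f r μ := by
  have hr0 : r ≠ 0 := by intro h; rw [h] at hr; exact (not_le.2 zero_lt_one) hr
  rcases eq_or_ne r ∞ with hrt | hrt
  · subst hrt
    simp only [ENNReal.inv_top, ENNReal.toReal_zero, ENNReal.rpow_zero, mul_one]
    rw [eLpNorm_exponent_top, eLpNormEssSup]
    have hae := ae_le_essSup (μ := μ) (f := fun x => (‖f x‖₊ : ℝ≥0∞))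
    by_contra hlt
    push_neg at hlt
    rw [MeasureTheory.ae_iff] at hae
    have hmem : {a} ⊆ {x | ¬ ((‖f x‖₊ : ℝ≥0∞) ≤ essSup (fun x => (‖f x‖₊ : ℝ≥0∞)) μ)} := by
      intro x hx
      rw [Set.mem_singleton_iff] at hx
      subst hx
      exact not_le.2 hlt
    have h2 := le_trans (measure_mono hmem) (le_of_eq hae)
    exact h0 (le_antisymm h2 zero_le)
  · have hrt' : r.toReal ≠ 0 := by
      simp [ENNReal.toReal_eq_zero_iff, hr0, hrt]
    have hrpos : (0:ℝ) < r.toReal := lt_of_le_of_ne (ENNReal.toReal_nonneg) (Ne.symm hrt')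
    rw [eLpNorm_eq_lintegral_rpow_enorm_toReal hr0 hrt]
    have hstep : (‖f a‖₊ : ℝ≥0∞) ^ r.toReal * μ {a}
        ≤ ∫⁻ x, (‖f x‖₊ : ℝ≥0∞) ^ r.toReal ∂μ := by
      rw [← lintegral_singleton (fun x => (‖f x‖₊ : ℝ≥0∞) ^ r.toReal) a]
      exact lintegral_mono' Measure.restrict_le_self le_rfl
    have := ENNReal.rpow_le_rpow hstep (by positivity : (0:ℝ) ≤ 1 / r.toReal)
    calc (‖f a‖₊ : ℝ≥0∞) * μ {a} ^ (r⁻¹).toReal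
        = ((‖f a‖₊ : ℝ≥0∞) ^ r.toReal * μ {a}) ^ (1 / r.toReal) := by
          rw [ENNReal.mul_rpow_of_nonneg _ _ (by positivity : (0:ℝ) ≤ 1 / r.toReal),
            ← ENNReal.rpow_mul, mul_one_div, div_self hrt', ENNReal.rpow_one,
            ENNReal.toReal_inv, one_div]
      _ ≤ _ := this

end LpLemmas

section LpLemmas2
open MeasureTheory
variable {α : Type} [MeasurableSpace α] [MeasurableSingletonClass α] [DecidableEq α]

lemma eLpNorm_ind (μ : Measure α) (E : Finset α) (p : ℝ≥0∞)
    (hp : 1 ≤ p) (hptop : p ≠ ∞) (hE : MeasurableSet (↑E : Set α)) :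
    eLpNorm (ConeFF.ind E) p μ = (μ ↑E) ^ (p⁻¹).toReal := by
  have hp0 : p ≠ 0 := by intro h; rw [h] at hp; exact (not_le.2 zero_lt_one) hp
  have hpt' : p.toReal ≠ 0 := by simp [ENNReal.toReal_eq_zero_iff, hp0, hptop]
  rw [eLpNorm_eq_lintegral_rpow_enorm_toReal hp0 hptop]
  have hpoint : (fun x => ‖ConeFF.ind E x‖ₑ ^ p.toReal)
      = (↑E : Set α).indicator 1 := by
    funext x
    by_cases hx : x ∈ E
    · simp [ConeFF.ind, hx, ENNReal.one_rpow]
    · simp only [ConeFF.ind, if_neg hx, enorm_zero]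
      rw [ENNReal.zero_rpow_of_pos (lt_of_le_of_ne ENNReal.toReal_nonneg (Ne.symm hpt'))]
      simp [hx]
  rw [hpoint, lintegral_indicator_one hE]
  rw [ENNReal.toReal_inv, one_div]

end LpLemmas2

section Limit

lemma exponent_le_of_rpow_le {s t K : ℝ} (hK : 0 < K)
    (h : ∀ n : ℕ, ∃ q : ℕ, n ≤ q ∧ (1:ℝ) ≤ (q:ℝ) ∧ (q:ℝ) ^ s ≤ K * (q:ℝ) ^ t) :
    s ≤ t := by
  by_contra hst
  push_neg at hst
  set ε := s - t with hε
  have hε0 : 0 < ε := by simp [hε]; linarith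
  obtain ⟨q, hq, hq1, hqle⟩ := h (⌈K ^ (1/ε)⌉₊ + 1)
  have hQ0 : (0:ℝ) < (q:ℝ) := by linarith
  have hKq : K ^ (1/ε) < (q:ℝ) := by
    have h1 : K ^ (1/ε) ≤ (⌈K ^ (1/ε)⌉₊ : ℝ) := Nat.le_ceil _
    have h2 : ((⌈K ^ (1/ε)⌉₊ + 1 : ℕ) : ℝ) ≤ (q:ℝ) := by exact_mod_cast hq
    push_cast at h2
    linarith
  have hqε : (q:ℝ) ^ ε ≤ K := by
    have hsplit : (q:ℝ) ^ s = (q:ℝ) ^ t * (q:ℝ) ^ ε := by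
      rw [← Real.rpow_add hQ0]
      congr 1
      simp [hε]
    rw [hsplit] at hqle
    have ht0 : (0:ℝ) < (q:ℝ) ^ t := Real.rpow_pos_of_pos hQ0 _
    calc (q:ℝ) ^ ε = ((q:ℝ) ^ t * (q:ℝ) ^ ε) / (q:ℝ) ^ t := by
          field_simp
      _ ≤ (K * (q:ℝ) ^ t) / (q:ℝ) ^ t := by
          gcongr
      _ = K := by field_simp
  have hgt : K < (q:ℝ) ^ ε := by
    calc K = (K ^ (1/ε)) ^ ε := by
          rw [← Real.rpow_mul hK.le, one_div, inv_mul_cancel₀ hε0.ne', Real.rpow_one]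
      _ < (q:ℝ) ^ ε := Real.rpow_lt_rpow (Real.rpow_nonneg hK.le _) hKq hε0
  linarith

end Limit

section Hull

lemma hull_mem (D : ℝ) (hD : 3 ≤ D) (x y : ℝ) (hx0 : 0 ≤ x) (hy0 : 0 ≤ y)
    (hy1 : y ≤ 1) (h1 : D * x ≤ D - 1) (h2 : x ≤ (D - 1) * y) :
    (x, y) ∈ convexHull ℝ
      ({((0 : ℝ), (0 : ℝ)), ((0 : ℝ), (1 : ℝ)), ((D - 1) / D, (1 : ℝ)),
        ((D - 1) / D, 1 / D)} : Set (ℝ × ℝ)) := by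
  set e := D - 1 with he
  have he0 : (0:ℝ) < e := by simp [he]; linarith
  have hD0 : (0:ℝ) < D := by linarith
  have hex : x < e := by nlinarith
  set t := D * x / e with ht
  have ht0 : 0 ≤ t := by positivity
  have ht1 : t ≤ 1 := by rw [ht, div_le_one he0]; linarith
  set l := (e * y - x) / (e - x) with hl
  have hl0 : 0 ≤ l := div_nonneg (by linarith) (by linarith)
  have hl1 : l ≤ 1 := by
    rw [hl, div_le_one (by linarith)]
    nlinarith
  set w : Fin 4 → ℝ := ![(1 - l) * (1 - t), l * (1 - t), l * t, (1 - l) * t] with hw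
  set z : Fin 4 → ℝ × ℝ := ![(0, 0), (0, 1), (e / D, 1), (e / D, 1 / D)] with hz
  have hsum : ∑ i, w i = 1 := by
    simp [hw, Fin.sum_univ_four]
    ring
  have hex' : e - x ≠ 0 := by linarith
  have hmem : (x, y) = Finset.univ.centerMass w z := by
    rw [Finset.centerMass_eq_of_sum_1 _ z hsum]
    simp only [hz, hw, Fin.sum_univ_four, Matrix.cons_val_zero, Matrix.cons_val_one,
      Matrix.head_cons, Matrix.cons_val_two, Matrix.tail_cons, Matrix.cons_val_three,
      Prod.smul_mk, smul_eq_mul, Prod.mk_add_mk, Prod.mk.injEq]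
    constructor
    · rw [ht]
      field_simp
      ring
    · rw [hl, ht]
      field_simp
      ring
  rw [hmem]
  apply Finset.centerMass_mem_convexHull
  · intro i _
    fin_cases i <;> simp [hw] <;> nlinarith
  · rw [hsum]; norm_num
  · intro i _
    fin_cases i <;> simp [hz, he, Set.mem_insert_iff]

end Hull

namespace ConeFF

variable (F : Type) [Field F] [Fintype F] [DecidableEq F]

lemma field_ineqs (d : ℕ) (hd : 3 ≤ d) (p r : ℝ≥0∞) (hp : 1 ≤ p) (hptop : p ≠ ∞)
    (hr : 1 ≤ r) (C₀ : ℝ) (hC₀ : 0 < C₀) (hq3 : 3 ≤ Fintype.card F)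
    (hop : ∀ f : (Fin d → F) → ℂ,
      eLpNorm (avg F d hd f) r (coneMeasure F d hd) ≤
        ENNReal.ofReal C₀ * eLpNorm f p (dxMeasure F d)) :
    (Fintype.card F : ℝ) ^ ((d : ℝ) * (p⁻¹).toReal)
        ≤ (2 * C₀) * (Fintype.card F : ℝ) ^ ((d : ℝ) - 1)
    ∧ (Fintype.card F : ℝ) ^ ((p⁻¹).toReal)
        ≤ (4 * C₀) * (Fintype.card F : ℝ) ^ (((d : ℝ) - 1) * (r⁻¹).toReal) := by
  have hp0 : p ≠ 0 := by intro h; rw [h] at hp; exact (not_le.2 zero_lt_one) hp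
  have hr0 : r ≠ 0 := by intro h; rw [h] at hr; exact (not_le.2 zero_lt_one) hr
  set q := Fintype.card F with hqdef
  set Q : ℝ := (q : ℝ) with hQdef
  set nC := (cone F d hd).card with hnCdef
  set x' := (p⁻¹).toReal with hx'def
  set y' := (r⁻¹).toReal with hy'def
  have hQ3 : (3:ℝ) ≤ Q := by rw [hQdef]; exact_mod_cast hq3
  have hQ0 : (0:ℝ) < Q := by linarith
  have hnC1 : 1 ≤ nC := cone_card_pos F d hd
  have hnC0 : (nC : ℝ≥0∞) ≠ 0 := Nat.cast_ne_zero.2 (by omega)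
  have hnCtop : (nC : ℝ≥0∞) ≠ ∞ := ENNReal.natCast_ne_top _
  have hnC0R : (0:ℝ) < (nC : ℝ) := by exact_mod_cast Nat.pos_of_ne_zero (by omega)
  have hx'0 : 0 ≤ x' := ENNReal.toReal_nonneg
  have hy'0 : 0 ≤ y' := ENNReal.toReal_nonneg
  have hx'1 : x' ≤ 1 := by
    rw [hx'def]
    calc (p⁻¹).toReal ≤ (1 : ℝ≥0∞).toReal :=
          ENNReal.toReal_mono ENNReal.one_ne_top (ENNReal.inv_le_one.2 hp)
      _ = 1 := ENNReal.toReal_one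
  have hy'1 : y' ≤ 1 := by
    rw [hy'def]
    calc (r⁻¹).toReal ≤ (1 : ℝ≥0∞).toReal :=
          ENNReal.toReal_mono ENNReal.one_ne_top (ENNReal.inv_le_one.2 hr)
      _ = 1 := ENNReal.toReal_one
  -- cardinality bound in ℝ
  have hd1 : ((d - 1 : ℕ) : ℝ) = (d : ℝ) - 1 := by
    rw [Nat.cast_sub (by omega), Nat.cast_one]
  have hnCle : (nC : ℝ) ≤ 2 * Q ^ ((d:ℝ) - 1) := by
    have h1 : (nC : ℝ) ≤ 2 * (q : ℝ) ^ (d - 1 : ℕ) := by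
      exact_mod_cast cone_card_le F d hd (by omega)
    calc (nC : ℝ) ≤ 2 * (q:ℝ) ^ (d - 1 : ℕ) := h1
      _ = 2 * Q ^ ((d:ℝ) - 1) := by rw [← Real.rpow_natCast Q (d-1), hd1]
  -- measure of the space point
  have hμ0 : coneMeasure F d hd ≠ 0 := by
    intro h
    have := cone_meas_univ F d hd
    rw [h] at this
    simp at this
  -- norm fact
  have hnCC : ((nC : ℕ) : ℂ) ≠ 0 := Nat.cast_ne_zero.2 (by omega)
  have hnn : ((‖((nC : ℕ) : ℂ)⁻¹‖₊ : ℝ≥0∞)) = (nC : ℝ≥0∞)⁻¹ := by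
    rw [nnnorm_inv, ENNReal.coe_inv (nnnorm_ne_zero_iff.2 hnCC)]
    congr 1
    simp
  ------------------------------------------------------------------
  -- TEST A : f = delta at 0
  ------------------------------------------------------------------
  have hA : (nC : ℝ≥0∞)⁻¹ ≤ ENNReal.ofReal C₀ * (((q : ℝ≥0∞) ^ d)⁻¹) ^ x' := by
    have hLHS : eLpNorm (avg F d hd (ind {0})) r (coneMeasure F d hd)
        = (nC : ℝ≥0∞)⁻¹ := by
      have hae : avg F d hd (ind {0}) =ᵐ[coneMeasure F d hd]
          (fun _ => ((nC : ℕ) : ℂ)⁻¹) := by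
        filter_upwards [cone_meas_ae F d hd] with y hy
        exact avg_delta F d hd hy
      rw [eLpNorm_congr_ae hae, eLpNorm_const _ hr0 hμ0, cone_meas_univ,
        ENNReal.one_rpow, mul_one]; exact hnn
    have hRHS : eLpNorm (ind ({0} : Finset (Fin d → F))) p (dxMeasure F d)
        = (((q : ℝ≥0∞) ^ d)⁻¹) ^ x' := by
      rw [eLpNorm_ind _ _ _ hp hptop (meas_top _), Finset.coe_singleton,
        ← Finset.coe_singleton, dx_finset, Finset.card_singleton]
      rw [Nat.cast_one, mul_one]
    rw [← hLHS, ← hRHS]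
    exact hop (ind {0})
  ------------------------------------------------------------------
  -- TEST B : f = indicator of the cone
  ------------------------------------------------------------------
  have hB : ((nC : ℝ≥0∞)⁻¹) ^ y'
      ≤ ENNReal.ofReal C₀ * ((((q : ℝ≥0∞) ^ d)⁻¹ * nC)) ^ x' := by
    have hpt := point_le_eLpNorm (coneMeasure F d hd) (avg F d hd (ind (cone F d hd)))
      0 r hr (by rw [cone_meas_singleton_zero]; exact ENNReal.inv_ne_zero.2 hnCtop)
      (by rw [cone_meas_singleton_zero]; exact ENNReal.inv_ne_top.2 hnC0)
    rw [cone_meas_singleton_zero, avg_indC_zero] at hpt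
    simp only [nnnorm_one, ENNReal.coe_one, one_mul] at hpt
    have hRHS : eLpNorm (ind (cone F d hd)) p (dxMeasure F d)
        = ((((q : ℝ≥0∞) ^ d)⁻¹ * nC)) ^ x' := by
      rw [eLpNorm_ind _ _ _ hp hptop (meas_top _), dx_finset]
    calc ((nC : ℝ≥0∞)⁻¹) ^ y' ≤ eLpNorm (avg F d hd (ind (cone F d hd))) r (coneMeasure F d hd) := hpt
      _ ≤ ENNReal.ofReal C₀ * eLpNorm (ind (cone F d hd)) p (dxMeasure F d) := hop _
      _ = ENNReal.ofReal C₀ * ((((q : ℝ≥0∞) ^ d)⁻¹ * nC)) ^ x' := by rw [hRHS]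
  ------------------------------------------------------------------
  -- convert to real inequalities
  ------------------------------------------------------------------
  have hqtop : ((q : ℝ≥0∞) ^ d)⁻¹ ≠ ∞ :=
    ENNReal.inv_ne_top.2 (by positivity)
  have htAne : ENNReal.ofReal C₀ * (((q : ℝ≥0∞) ^ d)⁻¹) ^ x' ≠ ∞ :=
    ENNReal.mul_ne_top ENNReal.ofReal_ne_top (ENNReal.rpow_ne_top_of_nonneg hx'0 hqtop)
  have htBne : ENNReal.ofReal C₀ * ((((q : ℝ≥0∞) ^ d)⁻¹ * nC)) ^ x' ≠ ∞ :=
    ENNReal.mul_ne_top ENNReal.ofReal_ne_top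
      (ENNReal.rpow_ne_top_of_nonneg hx'0 (ENNReal.mul_ne_top hqtop hnCtop))
  have hAr : ((nC : ℝ))⁻¹ ≤ C₀ * (((Q ^ d)⁻¹) ^ x') := by
    have := ENNReal.toReal_mono htAne hA
    rwa [ENNReal.toReal_inv, ENNReal.toReal_natCast, ENNReal.toReal_mul,
      ENNReal.toReal_ofReal hC₀.le, ← ENNReal.toReal_rpow, ENNReal.toReal_inv,
      ENNReal.toReal_pow, ENNReal.toReal_natCast] at this
  have hBr : (((nC : ℝ))⁻¹) ^ y' ≤ C₀ * (((Q ^ d)⁻¹ * nC) ^ x') := by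
    have := ENNReal.toReal_mono htBne hB
    rwa [← ENNReal.toReal_rpow, ENNReal.toReal_inv, ENNReal.toReal_natCast,
      ENNReal.toReal_mul, ENNReal.toReal_ofReal hC₀.le, ← ENNReal.toReal_rpow,
      ENNReal.toReal_mul, ENNReal.toReal_inv, ENNReal.toReal_pow,
      ENNReal.toReal_natCast, ENNReal.toReal_natCast] at this
  ------------------------------------------------------------------
  -- real-number algebra : part A
  ------------------------------------------------------------------
  have hQd : ((Q ^ d)⁻¹) ^ x' = Q ^ (-((d:ℝ) * x')) := by
    calc ((Q ^ d)⁻¹) ^ x' = (Q ^ (-((d:ℕ):ℝ))) ^ x' := by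
          rw [← Real.rpow_natCast Q d, ← Real.rpow_neg hQ0.le]
      _ = Q ^ (-((d:ℕ):ℝ) * x') := (Real.rpow_mul hQ0.le _ _).symm
      _ = Q ^ (-((d:ℝ) * x')) := by rw [neg_mul]
  have partA : Q ^ ((d : ℝ) * x') ≤ (2 * C₀) * Q ^ ((d : ℝ) - 1) := by
    rw [hQd] at hAr
    have hAB : Q ^ ((d:ℝ) * x') * Q ^ (-((d:ℝ) * x')) = 1 := by
      rw [← Real.rpow_add hQ0]
      simp
    have hQx0 : (0:ℝ) < Q ^ ((d:ℝ) * x') := Real.rpow_pos_of_pos hQ0 _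
    calc Q ^ ((d:ℝ) * x') = Q ^ ((d:ℝ) * x') * ((nC:ℝ)⁻¹ * nC) := by
          rw [inv_mul_cancel₀ hnC0R.ne', mul_one]
      _ ≤ Q ^ ((d:ℝ) * x') * ((C₀ * Q ^ (-((d:ℝ) * x'))) * nC) := by
          apply mul_le_mul_of_nonneg_left _ hQx0.le
          exact mul_le_mul_of_nonneg_right hAr hnC0R.le
      _ = C₀ * (nC:ℝ) * (Q ^ ((d:ℝ) * x') * Q ^ (-((d:ℝ) * x'))) := by ring
      _ = C₀ * (nC:ℝ) := by rw [hAB, mul_one]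
      _ ≤ C₀ * (2 * Q ^ ((d:ℝ) - 1)) := mul_le_mul_of_nonneg_left hnCle hC₀.le
      _ = (2 * C₀) * Q ^ ((d:ℝ) - 1) := by ring
  ------------------------------------------------------------------
  -- real-number algebra : part B
  ------------------------------------------------------------------
  have partB : Q ^ x' ≤ (4 * C₀) * Q ^ (((d : ℝ) - 1) * y') := by
    set W : ℝ := Q ^ (((d:ℝ) - 1) * y') with hWdef
    have hW0 : (0:ℝ) < W := Real.rpow_pos_of_pos hQ0 _
    -- lower bound for LHS of hBr
    have hL : (2 * W)⁻¹ ≤ ((nC : ℝ)⁻¹) ^ y' := by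
      have h1 : (nC:ℝ) ^ y' ≤ 2 * W := by
        calc (nC:ℝ) ^ y' ≤ (2 * Q ^ ((d:ℝ) - 1)) ^ y' :=
              Real.rpow_le_rpow hnC0R.le hnCle hy'0
          _ = 2 ^ y' * (Q ^ ((d:ℝ) - 1)) ^ y' := by
              rw [Real.mul_rpow (by norm_num) (Real.rpow_pos_of_pos hQ0 _).le]
          _ = 2 ^ y' * W := by rw [hWdef, Real.rpow_mul hQ0.le]
          _ ≤ 2 * W := by
              apply mul_le_mul_of_nonneg_right _ hW0.le
              calc (2:ℝ) ^ y' ≤ 2 ^ (1:ℝ) :=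
                    Real.rpow_le_rpow_of_exponent_le (by norm_num) hy'1
                _ = 2 := Real.rpow_one 2
      rw [Real.inv_rpow hnC0R.le]
      exact inv_anti₀ (Real.rpow_pos_of_pos hnC0R _) h1
    -- upper bound for RHS of hBr
    have hR : ((Q ^ d)⁻¹ * nC) ^ x' ≤ 2 * Q ^ (-x') := by
      have hinner : (Q ^ d)⁻¹ * (nC:ℝ) ≤ 2 * Q ^ (-(1:ℝ)) := by
        have h2 : (Q ^ d)⁻¹ * (nC:ℝ) ≤ (Q ^ d)⁻¹ * (2 * Q ^ ((d:ℝ) - 1)) :=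
          mul_le_mul_of_nonneg_left hnCle (by positivity)
        calc (Q ^ d)⁻¹ * (nC:ℝ) ≤ (Q ^ d)⁻¹ * (2 * Q ^ ((d:ℝ) - 1)) := h2
          _ = 2 * (Q ^ (-((d:ℕ):ℝ)) * Q ^ ((d:ℝ) - 1)) := by
              rw [← Real.rpow_natCast Q d, ← Real.rpow_neg hQ0.le]; ring
          _ = 2 * Q ^ (-(1:ℝ)) := by
              rw [← Real.rpow_add hQ0]
              congr 1
              ring
      calc ((Q ^ d)⁻¹ * nC) ^ x' ≤ (2 * Q ^ (-(1:ℝ))) ^ x' :=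
            Real.rpow_le_rpow (by positivity) hinner hx'0
        _ = 2 ^ x' * (Q ^ (-(1:ℝ))) ^ x' := by
            rw [Real.mul_rpow (by norm_num) (Real.rpow_pos_of_pos hQ0 _).le]
        _ = 2 ^ x' * Q ^ (-x') := by
            rw [← Real.rpow_mul hQ0.le]
            norm_num
        _ ≤ 2 * Q ^ (-x') := by
            apply mul_le_mul_of_nonneg_right _ (Real.rpow_pos_of_pos hQ0 _).le
            calc (2:ℝ) ^ x' ≤ 2 ^ (1:ℝ) :=
                  Real.rpow_le_rpow_of_exponent_le (by norm_num) hx'1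
              _ = 2 := Real.rpow_one 2
    have hchain : (2 * W)⁻¹ ≤ C₀ * (2 * Q ^ (-x')) :=
      le_trans hL (le_trans hBr (mul_le_mul_of_nonneg_left hR hC₀.le))
    have h1 : 1 ≤ (4 * C₀) * Q ^ (-x') * W := by
      have := mul_le_mul_of_nonneg_right hchain (by positivity : (0:ℝ) ≤ 2 * W)
      rw [inv_mul_cancel₀ (by positivity : (2 * W : ℝ) ≠ 0)] at this
      calc (1:ℝ) ≤ C₀ * (2 * Q ^ (-x')) * (2 * W) := this
        _ = (4 * C₀) * Q ^ (-x') * W := by ring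
    have hxx : Q ^ x' * Q ^ (-x') = 1 := by
      rw [← Real.rpow_add hQ0]; simp
    calc Q ^ x' = Q ^ x' * 1 := by rw [mul_one]
      _ ≤ Q ^ x' * ((4 * C₀) * Q ^ (-x') * W) :=
          mul_le_mul_of_nonneg_left h1 (Real.rpow_pos_of_pos hQ0 _).le
      _ = (4 * C₀) * W * (Q ^ x' * Q ^ (-x')) := by ring
      _ = (4 * C₀) * W := by rw [hxx, mul_one]
  exact ⟨partA, partB⟩




/-- necessary conditions for the boundedness of the restricted averaging
operator when the cone contains no subspace of cardinality `> q^{(d-1)/2}`. -/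
theorem statement2 (d : ℕ) (hd : 3 ≤ d) (p r : ℝ≥0∞) (hp : 1 ≤ p) (hr : 1 ≤ r)
    (C₀ : ℝ) (hC₀ : 0 < C₀)
    (h : ∃ N : ℕ, ∀ (F : Type) [Field F] [Fintype F] [DecidableEq F],
      ringChar F ≠ 2 → N ≤ Fintype.card F →
        (∀ H : Submodule F (Fin d → F), (H : Set (Fin d → F)) ⊆ ↑(cone F d hd) →
          (Nat.card H : ℝ) ≤ (Fintype.card F : ℝ) ^ (((d : ℝ) - 1) / 2)) ∧
        (∀ f : (Fin d → F) → ℂ,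
          eLpNorm (avg F d hd f) r (coneMeasure F d hd) ≤
            ENNReal.ofReal C₀ * eLpNorm f p (dxMeasure F d))) :
    (p⁻¹.toReal, r⁻¹.toReal) ∈ convexHull ℝ
      ({((0 : ℝ), (0 : ℝ)), ((0 : ℝ), (1 : ℝ)), (((d : ℝ) - 1) / d, (1 : ℝ)),
        (((d : ℝ) - 1) / d, 1 / (d : ℝ))} : Set (ℝ × ℝ)) := by
  classical
  obtain ⟨N, hN⟩ := h
  have hD : (3:ℝ) ≤ (d:ℝ) := by exact_mod_cast hd
  have hy'0 : 0 ≤ r⁻¹.toReal := ENNReal.toReal_nonneg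
  have hy'1 : r⁻¹.toReal ≤ 1 := by
    calc (r⁻¹).toReal ≤ (1 : ℝ≥0∞).toReal :=
          ENNReal.toReal_mono ENNReal.one_ne_top (ENNReal.inv_le_one.2 hr)
      _ = 1 := ENNReal.toReal_one
  by_cases hptop : p = ∞
  · have hx0 : p⁻¹.toReal = 0 := by rw [hptop]; simp
    rw [hx0]
    exact hull_mem (d:ℝ) hD 0 r⁻¹.toReal le_rfl hy'0 hy'1
      (by rw [mul_zero]; linarith) (mul_nonneg (by linarith) hy'0)
  · have key : ∀ n : ℕ, ∃ q : ℕ, n ≤ q ∧ (1:ℝ) ≤ (q:ℝ) ∧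
        ((q:ℝ) ^ ((d : ℝ) * p⁻¹.toReal) ≤ (2 * C₀) * (q:ℝ) ^ ((d : ℝ) - 1)
        ∧ (q:ℝ) ^ (p⁻¹.toReal) ≤ (4 * C₀) * (q:ℝ) ^ (((d : ℝ) - 1) * r⁻¹.toReal)) := by
      intro n
      obtain ⟨qp, hle, hprime⟩ := Nat.exists_infinite_primes (max (max n N) 3)
      haveI : Fact qp.Prime := ⟨hprime⟩
      have hcard : Fintype.card (ZMod qp) = qp := ZMod.card qp
      have hchar : ringChar (ZMod qp) ≠ 2 := by
        rw [ZMod.ringChar_zmod_n]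
        omega
      obtain ⟨-, hop⟩ := hN (ZMod qp) hchar (by omega)
      have hineq := field_ineqs (ZMod qp) d hd p r hp hptop hr C₀ hC₀
        (by omega) hop
      rw [hcard] at hineq
      exact ⟨qp, by omega, by exact_mod_cast Nat.one_le_iff_ne_zero.2 (by omega), hineq⟩
    have hA : (d : ℝ) * p⁻¹.toReal ≤ (d : ℝ) - 1 :=
      exponent_le_of_rpow_le (K := 2 * C₀) (by linarith) (fun n => by
        obtain ⟨q, h1, h2, h3, _⟩ := key n
        exact ⟨q, h1, h2, h3⟩)
    have hB : p⁻¹.toReal ≤ ((d : ℝ) - 1) * r⁻¹.toReal :=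
      exponent_le_of_rpow_le (K := 4 * C₀) (by linarith) (fun n => by
        obtain ⟨q, h1, h2, _, h4⟩ := key n
        exact ⟨q, h1, h2, h4⟩)
    exact hull_mem (d:ℝ) hD _ _ ENNReal.toReal_nonneg hy'0 hy'1 hA hB


end ConeFF
end

section
/- Let d ≥ 4 be even. There exist constants c₁, C₁, c₂, C₂ > 0 independent of q such that for every power q of an odd prime and every m ≠ (0,…,0) in F_q^d: if Γ(m) = 0 then c₁ q^{−(d−2)/2} ≤ |K(m)| = |σ^∨(m)| ≤ C₁ q^{−(d−2)/2}, and if Γ(m) ≠ 0 then c₂ q^{−d/2} ≤ |K(m)| = |σ^∨(m)| ≤ C₂ q^{−d/2}. Moreover K(0,…,0) = 0. -/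
open Finset MeasureTheory
open scoped ENNReal

namespace ConeFF

variable (F : Type) [Field F] [Fintype F] [DecidableEq F]

variable {F}

set_option linter.unusedSectionVars false
set_option linter.unusedVariables false
set_option maxHeartbeats 1000000

noncomputable def qchar (F : Type) [Field F] [Fintype F] [DecidableEq F] : MulChar F ℂ :=
  (quadraticChar F).ringHomComp (Int.castRingHom ℂ)

lemma two_ne_zero' (hF : ringChar F ≠ 2) : (2 : F) ≠ 0 := by
  intro h2
  have hd : ringChar F ∣ 2 := (CharP.cast_eq_zero_iff F (ringChar F) 2).mp h2
  have hp : (ringChar F).Prime := CharP.char_is_prime F (ringChar F)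
  exact hF ((Nat.prime_dvd_prime_iff_eq hp Nat.prime_two).mp hd)

lemma four_ne_zero' (hF : ringChar F ≠ 2) : (4 : F) ≠ 0 := by
  have h2 := two_ne_zero' hF
  have : (4 : F) = 2 * 2 := by norm_num
  rw [this]
  exact mul_ne_zero h2 h2

lemma sum_mulShift' {χ : AddChar F ℂ} (hχ : χ ≠ 1) (c : F) :
    ∑ s : F, χ (c * s) = if c = 0 then (Fintype.card F : ℂ) else 0 := by
  split_ifs with h
  · simp [h]
  · have hprim : χ.IsPrimitive := AddChar.IsPrimitive.of_ne_one hχ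
    have hne : χ.mulShift c ≠ 1 := hprim h
    have hne0 : χ.mulShift c ≠ 0 := by
      obtain ⟨x, hx⟩ := AddChar.ne_one_iff.mp hne
      intro h0
      apply hx
      rw [h0]
      simp
    have := AddChar.sum_eq_zero_iff_ne_zero.mpr hne0
    simpa using this

lemma addChar_sum {χ : AddChar F ℂ} {ι : Type*} (s : Finset ι) (f : ι → F) :
    χ (∑ i ∈ s, f i) = ∏ i ∈ s, χ (f i) := by
  classical
  induction s using Finset.cons_induction with
  | empty => simp
  | cons a s ha ih => simp [Finset.sum_insert ha, Finset.prod_insert ha, AddChar.map_add_eq_mul, ih]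

lemma sum_dot {χ : AddChar F ℂ} (hχ : χ ≠ 1) {k : ℕ} (m : Fin k → F) :
    ∑ x : Fin k → F, χ (dotProduct m x) =
      if m = 0 then ((Fintype.card F : ℂ)) ^ k else 0 := by
  have h1 : ∀ x : Fin k → F, χ (dotProduct m x) = ∏ i, χ (m i * x i) := by
    intro x
    rw [dotProduct, addChar_sum]
  simp_rw [h1]
  rw [← Fintype.piFinset_univ,
    ← Finset.prod_univ_sum (fun _ : Fin k => (univ : Finset F)) (fun i t => χ (m i * t))]
  have h2 : ∀ i, ∑ t : F, χ (m i * t) = if m i = 0 then (Fintype.card F : ℂ) else 0 :=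
    fun i => sum_mulShift' hχ (m i)
  simp_rw [h2]
  by_cases hm : m = 0
  · subst hm; simp
  · obtain ⟨i, hi⟩ := Function.ne_iff.mp hm
    rw [if_neg hm]
    apply Finset.prod_eq_zero (Finset.mem_univ i)
    simp at hi
    simp [hi]

lemma sum_sq_eq (hF : ringChar F ≠ 2) {χ : AddChar F ℂ} (hχ : χ ≠ 1) {s : F} (hs : s ≠ 0) :
    ∑ t : F, χ (s * t ^ 2) = (quadraticChar F s : ℂ) * gaussSum (qchar F) χ := by
  have step1 : ∑ t : F, χ (s * t ^ 2) =
      ∑ u : F, ((quadraticChar F u : ℂ) + 1) * χ (s * u) := by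
    rw [← Finset.sum_fiberwise_of_maps_to (g := fun t : F => t ^ 2)
      (fun t _ => Finset.mem_univ (t ^ 2)) (fun t => χ (s * t ^ 2))]
    refine Finset.sum_congr rfl fun u _ => ?_
    have h1 : ∑ t ∈ univ.filter (fun t : F => t ^ 2 = u), χ (s * t ^ 2) =
        ∑ t ∈ univ.filter (fun t : F => t ^ 2 = u), χ (s * u) := by
      refine Finset.sum_congr rfl fun t ht => ?_
      rw [(Finset.mem_filter.mp ht).2]
    rw [h1, Finset.sum_const, nsmul_eq_mul]
    congr 1
    have hcard := quadraticChar_card_sqrts hF u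
    have : (univ.filter (fun t : F => t ^ 2 = u)).card = {x : F | x ^ 2 = u}.toFinset.card := by
      congr 1
      ext t
      simp
    rw [this]
    exact_mod_cast congrArg (fun z : ℤ => (z : ℂ)) hcard
  rw [step1]
  have expand : ∀ u : F, ((quadraticChar F u : ℂ) + 1) * χ (s * u) =
      (quadraticChar F u : ℂ) * χ (s * u) + χ (s * u) := fun u => by ring
  simp_rw [expand, Finset.sum_add_distrib, sum_mulShift' hχ s, if_neg hs, add_zero]
  -- now `∑ u, η u * χ (s u) = η s * g`
  have hmul : ∑ u : F, (quadraticChar F u : ℂ) * χ (s * u) =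
      gaussSum (qchar F) (χ.mulShift s) := by
    unfold gaussSum
    refine Finset.sum_congr rfl fun u _ => ?_
    simp [qchar, MulChar.ringHomComp_apply]
  rw [hmul]
  have hunit := gaussSum_mulShift (qchar F) χ (Units.mk0 s hs)
  have hsq : (quadraticChar F s : ℂ) * (quadraticChar F s : ℂ) = 1 := by
    have := quadraticChar_sq_one hs
    have : ((quadraticChar F s : ℤ) ^ 2 : ℂ) = 1 := by exact_mod_cast congrArg (fun z : ℤ => (z : ℂ)) this
    push_cast at this
    linear_combination this
  have happ : qchar F (Units.mk0 s hs : F) = (quadraticChar F s : ℂ) := rfl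
  rw [happ] at hunit
  simp only [Units.val_mk0] at hunit
  calc gaussSum (qchar F) (χ.mulShift s)
      = ((quadraticChar F s : ℂ) * (quadraticChar F s : ℂ)) * gaussSum (qchar F) (χ.mulShift s) := by
        rw [hsq, one_mul]
    _ = (quadraticChar F s : ℂ) * gaussSum (qchar F) χ := by
        rw [mul_assoc, hunit]

lemma sum_sq_lin (hF : ringChar F ≠ 2) {χ : AddChar F ℂ} (hχ : χ ≠ 1) {s : F} (hs : s ≠ 0)
    (b : F) :
    ∑ t : F, χ (s * t ^ 2 + b * t) =
      χ (-(b ^ 2) * (4 * s)⁻¹) * ((quadraticChar F s : ℂ) * gaussSum (qchar F) χ) := by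
  have h2 : (2 : F) ≠ 0 := by
    intro h2
    have hd : ringChar F ∣ 2 := (CharP.cast_eq_zero_iff F (ringChar F) 2).mp h2
    have hp : (ringChar F).Prime := CharP.char_is_prime F (ringChar F)
    exact hF ((Nat.prime_dvd_prime_iff_eq hp Nat.prime_two).mp hd)
  have h4 : (4 : F) ≠ 0 := by
    have : (4 : F) = 2 * 2 := by norm_num
    rw [this]; exact mul_ne_zero h2 h2
  have key : ∀ t : F, s * t ^ 2 + b * t =
      -(b ^ 2) * (4 * s)⁻¹ + s * (t + b * (2 * s)⁻¹) ^ 2 := by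
    intro t
    field_simp
    ring
  simp_rw [key, AddChar.map_add_eq_mul]
  rw [← Finset.mul_sum]
  congr 1
  rw [← sum_sq_eq hF hχ hs]
  exact Fintype.sum_equiv (Equiv.addRight (b * (2 * s)⁻¹)) _ _ fun t => rfl

lemma sum_two_var {χ : AddChar F ℂ} (hχ : χ ≠ 1) {s : F} (hs : s ≠ 0) (a b : F) :
    ∑ u : F, ∑ v : F, χ (-(s * u * v) + (a * u + b * v)) =
      (Fintype.card F : ℂ) * χ (a * b * s⁻¹) := by
  have h1 : ∀ u v : F, -(s * u * v) + (a * u + b * v) = a * u + (b - s * u) * v := by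
    intro u v; ring
  simp_rw [h1, AddChar.map_add_eq_mul, ← Finset.mul_sum]
  have h2 : ∀ u : F, ∑ v : F, χ ((b - s * u) * v) =
      if b - s * u = 0 then (Fintype.card F : ℂ) else 0 := fun u => sum_mulShift' hχ _
  simp_rw [h2]
  have h3 : ∀ u : F, χ (a * u) * (if b - s * u = 0 then (Fintype.card F : ℂ) else 0) =
      if u = b * s⁻¹ then (Fintype.card F : ℂ) * χ (a * (b * s⁻¹)) else 0 := by
    intro u
    by_cases h : u = b * s⁻¹
    · subst h
      have : b - s * (b * s⁻¹) = 0 := by field_simp; ring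
      rw [if_pos this, if_pos rfl, mul_comm]
    · have hne : b - s * u ≠ 0 := by
        intro h0
        apply h
        field_simp
        linear_combination -h0
      rw [if_neg hne, if_neg h, mul_zero]
  simp_rw [h3]
  rw [Finset.sum_ite_eq' univ (b * s⁻¹) (fun _ => (Fintype.card F : ℂ) * χ (a * (b * s⁻¹)))]
  rw [if_pos (Finset.mem_univ _), mul_assoc]

lemma sum_snoc {k : ℕ} {M : Type} [AddCommMonoid M] (f : (Fin (k+1) → F) → M) :
    ∑ x : Fin (k+1) → F, f x = ∑ u : F, ∑ y : Fin k → F, f (Fin.snoc y u) := by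
  calc ∑ x : Fin (k+1) → F, f x
      = ∑ p : F × (Fin k → F), f (Fin.snoc p.2 p.1) :=
        (Fintype.sum_equiv (Fin.snocEquiv fun _ => F) _ _ fun p => rfl).symm
    _ = ∑ u : F, ∑ y : Fin k → F, f (Fin.snoc y u) := Fintype.sum_prod_type _

lemma sum_filter_lt {n : ℕ} {M : Type} [AddCommMonoid M] (g : Fin (n+2) → M) :
    ∑ i ∈ univ.filter (fun i : Fin (n+2) => (i : ℕ) < n), g i =
      ∑ j : Fin n, g (Fin.castSucc (Fin.castSucc j)) := by
  refine Finset.sum_bij' (fun i hi => (⟨i.1, by simpa using hi⟩ : Fin n))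
    (fun j _ => Fin.castSucc (Fin.castSucc j)) ?_ ?_ ?_ ?_ ?_
  · intro a ha; exact Finset.mem_univ _
  · intro j hj
    simp only [Finset.mem_filter, Finset.mem_univ, true_and]
    simpa using j.2
  · intro a ha; exact Fin.ext rfl
  · intro j hj; exact Fin.ext rfl
  · intro a ha; exact congrArg g (Fin.ext rfl)

def Qform (n : ℕ) (x : Fin (n+2) → F) : F :=
  (∑ i ∈ univ.filter (fun i : Fin (n+2) => (i : ℕ) < n), x i ^ 2) -
    x ⟨n, by omega⟩ * x ⟨n+1, by omega⟩

lemma inner_sum {n : ℕ} (hn : 2 ≤ n) (hne : Even n) (hF : ringChar F ≠ 2) {χ : AddChar F ℂ} (hχ : χ ≠ 1)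
    {s : F} (hs : s ≠ 0) (m : Fin (n+2) → F) :
    ∑ x : Fin (n+2) → F, χ (s * Qform n x + dotProduct m x) =
      (Fintype.card F : ℂ) * gaussSum (qchar F) χ ^ n *
        χ (-(gammaForm F (n+2) (by omega) m) * (4 * s)⁻¹) := by
  have h4 : (4 : F) ≠ 0 := four_ne_zero' hF
  -- abbreviations
  set mA := m (Fin.castSucc (Fin.last n)) with hmA
  set mB := m (Fin.last (n+1)) with hmB
  -- exponent decomposition
  have hexp : ∀ (v u : F) (y : Fin n → F),
      s * Qform n (Fin.snoc (Fin.snoc y u) v) +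
        dotProduct m (Fin.snoc (Fin.snoc y u) v) =
      (∑ j : Fin n, (s * y j ^ 2 + m (Fin.castSucc (Fin.castSucc j)) * y j)) +
        (-(s * u * v) + (mA * u + mB * v)) := by
    intro v u y
    unfold Qform
    rw [sum_filter_lt]
    rw [dotProduct, Fin.sum_univ_castSucc, Fin.sum_univ_castSucc]
    have e1 : (Fin.snoc (Fin.snoc y u) v : Fin (n+2) → F) ⟨n, by omega⟩ = u := by
      rw [show (⟨n, by omega⟩ : Fin (n+2)) = Fin.castSucc (Fin.last n) from rfl,
        Fin.snoc_castSucc, Fin.snoc_last]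
    have e2 : (Fin.snoc (Fin.snoc y u) v : Fin (n+2) → F) ⟨n+1, by omega⟩ = v := by
      rw [show (⟨n+1, by omega⟩ : Fin (n+2)) = Fin.last (n+1) from rfl, Fin.snoc_last]
    simp only [Fin.snoc_castSucc, Fin.snoc_last, e1, e2]
    rw [Finset.sum_add_distrib, ← Finset.mul_sum]
    ring
  -- expand the sum over the whole space
  rw [sum_snoc (k := n+1)]
  have hsplit : ∀ v : F,
      ∑ z : Fin (n+1) → F, χ (s * Qform n (Fin.snoc z v) + dotProduct m (Fin.snoc z v)) =
      ∑ u : F, ∑ y : Fin n → F,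
        χ (s * Qform n (Fin.snoc (Fin.snoc y u) v) +
          dotProduct m (Fin.snoc (Fin.snoc y u) v)) := fun v => sum_snoc _
  rw [Finset.sum_congr rfl fun v _ => hsplit v]
  have hexp2 : ∀ (v u : F) (y : Fin n → F),
      χ (s * Qform n (Fin.snoc (Fin.snoc y u) v) +
        dotProduct m (Fin.snoc (Fin.snoc y u) v)) =
      (∏ j : Fin n, χ (s * y j ^ 2 + m (Fin.castSucc (Fin.castSucc j)) * y j)) *
        χ (-(s * u * v) + (mA * u + mB * v)) := by
    intro v u y
    rw [hexp v u y, AddChar.map_add_eq_mul, addChar_sum]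
  rw [Finset.sum_congr rfl fun v _ => Finset.sum_congr rfl fun u _ =>
    Finset.sum_congr rfl fun y _ => hexp2 v u y]
  -- factor the y-sum out
  simp_rw [← Finset.sum_mul, ← Finset.mul_sum]
  have hS2 : ∑ v : F, ∑ u : F, χ (-(s * u * v) + (mA * u + mB * v)) =
      (Fintype.card F : ℂ) * χ (mA * mB * s⁻¹) := by
    rw [Finset.sum_comm]
    exact sum_two_var hχ hs mA mB
  have hS1 : ∑ y : Fin n → F, ∏ j : Fin n,
      χ (s * y j ^ 2 + m (Fin.castSucc (Fin.castSucc j)) * y j) =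
      χ (-(∑ j : Fin n, m (Fin.castSucc (Fin.castSucc j)) ^ 2) * (4 * s)⁻¹) *
        gaussSum (qchar F) χ ^ n := by
    rw [← Fintype.piFinset_univ,
      ← Finset.prod_univ_sum (fun _ : Fin n => (univ : Finset F))
        (fun j t => χ (s * t ^ 2 + m (Fin.castSucc (Fin.castSucc j)) * t))]
    have : ∀ j : Fin n, ∑ t : F, χ (s * t ^ 2 + m (Fin.castSucc (Fin.castSucc j)) * t) =
        χ (-(m (Fin.castSucc (Fin.castSucc j)) ^ 2) * (4 * s)⁻¹) *
          ((quadraticChar F s : ℂ) * gaussSum (qchar F) χ) :=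
      fun j => sum_sq_lin hF hχ hs _
    rw [Finset.prod_congr rfl fun j _ => this j, Finset.prod_mul_distrib,
      Finset.prod_const, card_univ, Fintype.card_fin]
    rw [← addChar_sum]
    have hsum : ∑ j : Fin n, -(m (Fin.castSucc (Fin.castSucc j)) ^ 2) * (4 * s)⁻¹ =
        -(∑ j : Fin n, m (Fin.castSucc (Fin.castSucc j)) ^ 2) * (4 * s)⁻¹ := by
      rw [← Finset.sum_mul]
      congr 1
      simp
    rw [hsum]
    congr 1
    rw [mul_pow]
    have hqs : ((quadraticChar F s : ℂ)) ^ n = 1 := by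
      obtain ⟨e, he⟩ := hne
      have h1 : ((quadraticChar F s : ℤ) ^ 2 : ℂ) = 1 := by
        exact_mod_cast congrArg (fun z : ℤ => (z : ℂ)) (quadraticChar_sq_one hs)
      push_cast at h1
      calc ((quadraticChar F s : ℂ)) ^ n = (((quadraticChar F s : ℂ)) ^ 2) ^ e := by
            rw [he, ← pow_mul]; ring_nf
        _ = 1 := by rw [h1, one_pow]
    rw [hqs, one_mul]
  rw [hS1, hS2]
  -- final algebra
  have hΓ : gammaForm F (n+2) (by omega) m =
      (∑ j : Fin n, m (Fin.castSucc (Fin.castSucc j)) ^ 2) - 4 * mA * mB := by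
    unfold gammaForm
    simp only [Nat.add_sub_cancel]
    rw [sum_filter_lt]
    rfl
  have harg : -(∑ j : Fin n, m (Fin.castSucc (Fin.castSucc j)) ^ 2) * (4 * s)⁻¹ +
      mA * mB * s⁻¹ = -(gammaForm F (n+2) (by omega) m) * (4 * s)⁻¹ := by
    rw [hΓ]
    field_simp
    ring
  rw [← harg, AddChar.map_add_eq_mul]
  ring

lemma cone_char_sum {n : ℕ} (hn : 2 ≤ n) (hne : Even n)
    (hF : ringChar F ≠ 2) {χ : AddChar F ℂ} (hχ : χ ≠ 1) (m : Fin (n+2) → F) :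
    ∑ x ∈ cone F (n+2) (by omega), χ (dotProduct m x) =
      (if m = 0 then ((Fintype.card F : ℂ)) ^ (n+1) else 0) +
      gaussSum (qchar F) χ ^ n *
        ((if gammaForm F (n+2) (by omega) m = 0 then (Fintype.card F : ℂ) else 0) - 1) := by
  have h4 : (4 : F) ≠ 0 := four_ne_zero' hF
  have hq : (Fintype.card F : ℂ) ≠ 0 := by
    exact_mod_cast Nat.cast_ne_zero.mpr Fintype.card_ne_zero
  set q : ℂ := (Fintype.card F : ℂ) with hqdef
  -- the cone as zero set of Qform
  have hcone : cone F (n+2) (by omega) = univ.filter (fun x => Qform n x = 0) := by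
    unfold cone Qform
    ext x
    simp only [Finset.mem_filter, Finset.mem_univ, true_and, Nat.add_sub_cancel,
      sub_eq_zero]
    exact Iff.rfl
  -- key identity after multiplying by q
  have key : q * ∑ x ∈ cone F (n+2) (by omega), χ (dotProduct m x) =
      ∑ s : F, ∑ x : Fin (n+2) → F, χ (s * Qform n x + dotProduct m x) := by
    rw [Finset.sum_comm]
    have h1 : ∀ x : Fin (n+2) → F,
        ∑ s : F, χ (s * Qform n x + dotProduct m x) =
        (if Qform n x = 0 then q else 0) * χ (dotProduct m x) := by
      intro x
      simp_rw [AddChar.map_add_eq_mul, ← Finset.sum_mul]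
      congr 1
      have := sum_mulShift' hχ (Qform n x)
      simp_rw [mul_comm (Qform n x)] at this
      exact this
    rw [Finset.sum_congr rfl fun x _ => h1 x]
    simp_rw [ite_mul, zero_mul]
    rw [← Finset.sum_filter, ← hcone, Finset.mul_sum]
  -- split off s = 0 in the RHS
  have split : ∑ s : F, ∑ x : Fin (n+2) → F, χ (s * Qform n x + dotProduct m x) =
      (if m = 0 then q ^ (n+2) else 0) +
      q * gaussSum (qchar F) χ ^ n *
        ((if gammaForm F (n+2) (by omega) m = 0 then q else 0) - 1) := by
    rw [← Finset.add_sum_erase univ _ (Finset.mem_univ (0 : F))]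
    congr 1
    · simp_rw [zero_mul, zero_add]
      exact sum_dot hχ m
    · have h2 : ∀ s ∈ univ.erase (0 : F),
          ∑ x : Fin (n+2) → F, χ (s * Qform n x + dotProduct m x) =
          q * gaussSum (qchar F) χ ^ n *
            χ (-(gammaForm F (n+2) (by omega) m) * (4 * s)⁻¹) := by
        intro s hsmem
        exact inner_sum hn hne hF hχ (Finset.ne_of_mem_erase hsmem) m
      rw [Finset.sum_congr rfl h2]
      rw [← Finset.mul_sum]
      congr 1
      -- reindex s ↦ -(4 s)⁻¹ on F \ {0}
      have hbij : ∑ s ∈ univ.erase (0 : F),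
          χ (-(gammaForm F (n+2) (by omega) m) * (4 * s)⁻¹) =
          ∑ s ∈ univ.erase (0 : F), χ (gammaForm F (n+2) (by omega) m * s) := by
        refine Finset.sum_nbij' (fun s => -(4 * s)⁻¹) (fun s => -(4 * s)⁻¹) ?_ ?_ ?_ ?_ ?_
        · intro a ha
          simp only [Finset.mem_erase, Finset.mem_univ, and_true] at ha ⊢
          intro h0
          apply ha
          have : (4 * a)⁻¹ = 0 := by
            have := neg_eq_zero.mp h0
            exact this
          have h44 : 4 * a ≠ 0 := mul_ne_zero h4 ha
          exact absurd (inv_eq_zero.mp this) h44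
        · intro a ha
          simp only [Finset.mem_erase, Finset.mem_univ, and_true] at ha ⊢
          intro h0
          apply ha
          have : (4 * a)⁻¹ = 0 := neg_eq_zero.mp h0
          have h44 : 4 * a ≠ 0 := mul_ne_zero h4 ha
          exact absurd (inv_eq_zero.mp this) h44
        · intro a ha
          simp only [Finset.mem_erase, Finset.mem_univ, and_true] at ha
          field_simp
        · intro a ha
          simp only [Finset.mem_erase, Finset.mem_univ, and_true] at ha
          field_simp
        · intro a ha
          simp only [Finset.mem_erase, Finset.mem_univ, and_true] at ha
          congr 1
          field_simp
      rw [hbij, Finset.sum_erase_eq_sub (Finset.mem_univ (0 : F))]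
      rw [sum_mulShift' hχ, mul_zero, AddChar.map_zero_eq_one]
  -- conclude by cancelling q
  apply mul_left_cancel₀ hq
  rw [key, split]
  by_cases hm : m = 0
  · have hG0 : gammaForm F (n+2) (by omega) (0 : Fin (n+2) → F) = 0 := by
      unfold gammaForm
      simp
    simp only [hm, hG0, if_pos rfl, if_true]
    ring
  · simp only [if_neg hm]
    ring

lemma qchar_ne_one (hF : ringChar F ≠ 2) : qchar F ≠ 1 := by
  unfold qchar
  rw [MulChar.ringHomComp_ne_one_iff]
  · exact quadraticChar_ne_one hF
  · exact fun a b h => by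
      have : ((a : ℤ) : ℂ) = ((b : ℤ) : ℂ) := h
      exact_mod_cast this

lemma qchar_neg_one (hF : ringChar F ≠ 2) :
    qchar F (-1) = 1 ∨ qchar F (-1) = -1 := by
  have h : (-1 : F) ≠ 0 := by norm_num
  rcases quadraticChar_dichotomy h with h1 | h1
  · left; unfold qchar; rw [MulChar.ringHomComp_apply, h1]; norm_num
  · right; unfold qchar; rw [MulChar.ringHomComp_apply, h1]; norm_num

lemma gauss_sq (hF : ringChar F ≠ 2) {χ : AddChar F ℂ} (hχ : χ ≠ 1) :
    gaussSum (qchar F) χ ^ 2 = qchar F (-1) * (Fintype.card F : ℂ) :=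
  gaussSum_sq (qchar_ne_one hF) ((quadraticChar_isQuadratic F).comp _)
    (AddChar.IsPrimitive.of_ne_one hχ)

lemma gauss_pow_n (hF : ringChar F ≠ 2) {χ : AddChar F ℂ} (hχ : χ ≠ 1) {e : ℕ} :
    ∃ ε : ℝ, (ε = 1 ∨ ε = -1) ∧
      gaussSum (qchar F) χ ^ (e + e) = (ε : ℂ) * (Fintype.card F : ℂ) ^ e := by
  have h2 : gaussSum (qchar F) χ ^ (e + e) =
      (qchar F (-1)) ^ e * (Fintype.card F : ℂ) ^ e := by
    have : gaussSum (qchar F) χ ^ (e + e) = (gaussSum (qchar F) χ ^ 2) ^ e := by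
      rw [← pow_mul]; ring_nf
    rw [this, gauss_sq hF hχ, mul_pow]
  rcases qchar_neg_one hF with h1 | h1
  · exact ⟨1, Or.inl rfl, by rw [h2, h1]; norm_num⟩
  · rcases Nat.even_or_odd e with he | he
    · exact ⟨1, Or.inl rfl, by rw [h2, h1, he.neg_one_pow]; norm_num⟩
    · exact ⟨-1, Or.inr rfl, by rw [h2, h1, he.neg_one_pow]; norm_num⟩

lemma norm_gauss_pow (hF : ringChar F ≠ 2) {χ : AddChar F ℂ} (hχ : χ ≠ 1) {e : ℕ} :
    ‖gaussSum (qchar F) χ ^ (e + e)‖ = (Fintype.card F : ℝ) ^ e := by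
  obtain ⟨ε, hε, hg⟩ := gauss_pow_n hF hχ (e := e)
  rw [hg]
  rw [norm_mul]
  have h1 : ‖(ε : ℂ)‖ = 1 := by rcases hε with h | h <;> simp [h]
  rw [h1, one_mul]
  rw [← Complex.ofReal_natCast, ← Complex.ofReal_pow, Complex.norm_real]
  exact abs_of_nonneg (by positivity)

lemma card_cone_eq {n e : ℕ} (hn : 2 ≤ n) (he : n = e + e)
    (hF : ringChar F ≠ 2) {χ : AddChar F ℂ} (hχ : χ ≠ 1) :
    ∃ ε : ℝ, (ε = 1 ∨ ε = -1) ∧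
      ((cone F (n+2) (by omega)).card : ℝ) =
        (Fintype.card F : ℝ) ^ (n+1) + ε * (Fintype.card F : ℝ) ^ e *
          ((Fintype.card F : ℝ) - 1) := by
  have hne : Even n := ⟨e, he⟩
  have hsum := cone_char_sum hn hne hF hχ (0 : Fin (n+2) → F)
  have hG0 : gammaForm F (n+2) (by omega) (0 : Fin (n+2) → F) = 0 := by
    unfold gammaForm; simp
  rw [if_pos rfl, if_pos hG0] at hsum
  have hlhs : ∑ x ∈ cone F (n+2) (by omega : 3 ≤ n + 2), χ (dotProduct 0 x) =
      ((cone F (n+2) (by omega)).card : ℂ) := by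
    rw [Finset.sum_congr rfl fun x _ => by
      rw [zero_dotProduct, AddChar.map_zero_eq_one]]
    simp
  rw [hlhs] at hsum
  obtain ⟨ε, hε, hg⟩ := gauss_pow_n hF hχ (e := e)
  rw [← he] at hg
  rw [hg] at hsum
  refine ⟨ε, hε, ?_⟩
  have h9 : (((cone F (n+2) (by omega)).card : ℕ) : ℂ) =
      (((Fintype.card F : ℝ) ^ (n+1) + ε * (Fintype.card F : ℝ) ^ e *
        ((Fintype.card F : ℝ) - 1) : ℝ) : ℂ) := by
    rw [hsum]
    push_cast
    ring
  exact_mod_cast h9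

lemma card_F_ge_3 (hF : ringChar F ≠ 2) : 3 ≤ (Fintype.card F : ℝ) := by
  have hodd : Fintype.card F % 2 = 1 := FiniteField.odd_card_of_char_ne_two hF
  have h2 : 2 ≤ Fintype.card F := Fintype.one_lt_card
  have h3 : 3 ≤ Fintype.card F := by omega
  exact_mod_cast h3

lemma card_cone_bounds {n e : ℕ} (hn : 2 ≤ n) (he : n = e + e)
    (hF : ringChar F ≠ 2) {χ : AddChar F ℂ} (hχ : χ ≠ 1) :
    2/3 * (Fintype.card F : ℝ) ^ (n+1) ≤ ((cone F (n+2) (by omega)).card : ℝ) ∧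
    ((cone F (n+2) (by omega)).card : ℝ) ≤ 4/3 * (Fintype.card F : ℝ) ^ (n+1) := by
  obtain ⟨ε, hε, hc⟩ := card_cone_eq hn he hF hχ
  set qR := (Fintype.card F : ℝ) with hqR
  have hq3 : 3 ≤ qR := card_F_ge_3 hF
  have hq0 : 0 < qR := by linarith
  have he1 : 1 ≤ e := by omega
  -- |ε q^e (q-1)| ≤ q^{e+1} ≤ q^{n+1}/3
  have hmid : qR ^ e * (qR - 1) ≤ 1/3 * qR ^ (n+1) := by
    have h1 : qR ^ e * (qR - 1) ≤ qR ^ e * qR := by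
      apply mul_le_mul_of_nonneg_left (by linarith) (by positivity)
    have h2 : qR ^ e * qR = qR ^ (e+1) := by ring
    have h3 : qR ^ (e+1) * 3 ≤ qR ^ (n+1) := by
      have : qR ^ (e+1) * 3 ≤ qR ^ (e+1) * qR ^ (n - e) := by
        apply mul_le_mul_of_nonneg_left _ (by positivity)
        calc (3:ℝ) ≤ qR := hq3
          _ = qR ^ 1 := (pow_one qR).symm
          _ ≤ qR ^ (n - e) := pow_le_pow_right₀ (by linarith) (by omega)
      calc qR ^ (e+1) * 3 ≤ qR ^ (e+1) * qR ^ (n - e) := this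
        _ = qR ^ (e + 1 + (n - e)) := (pow_add qR (e+1) (n-e)).symm
        _ = qR ^ (n+1) := by congr 1; omega
    linarith
  have hmid0 : 0 ≤ qR ^ e * (qR - 1) := by
    apply mul_nonneg (by positivity) (by linarith)
  rcases hε with h | h <;> subst h <;> constructor <;> rw [hc] <;> nlinarith [pow_pos hq0 (n+1)]

lemma card_cone_pos {n e : ℕ} (hn : 2 ≤ n) (he : n = e + e)
    (hF : ringChar F ≠ 2) {χ : AddChar F ℂ} (hχ : χ ≠ 1) :
    0 < ((cone F (n+2) (by omega)).card : ℝ) := by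
  have h := (card_cone_bounds hn he hF hχ).1
  have hq0 : (0:ℝ) < (Fintype.card F : ℝ) := by
    have := card_F_ge_3 hF; linarith
  calc (0:ℝ) < 2/3 * (Fintype.card F : ℝ) ^ (n+1) := by positivity
    _ ≤ _ := h

lemma norm_sigmaInv {n e : ℕ} (hn : 2 ≤ n) (he : n = e + e)
    (hF : ringChar F ≠ 2) {χ : AddChar F ℂ} (hχ : χ ≠ 1)
    {m : Fin (n+2) → F} (hm : m ≠ 0) :
    ‖sigmaInv F (n+2) (by omega) χ m‖ =
      (((cone F (n+2) (by omega)).card : ℝ))⁻¹ * (Fintype.card F : ℝ) ^ e *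
        (if gammaForm F (n+2) (by omega) m = 0 then (Fintype.card F : ℝ) - 1 else 1) := by
  have hne : Even n := ⟨e, he⟩
  unfold sigmaInv
  rw [cone_char_sum hn hne hF hχ m, if_neg hm, zero_add]
  rw [norm_mul, norm_mul, norm_inv]
  have h1 : ‖((cone F (n+2) (by omega : 3 ≤ n + 2)).card : ℂ)‖ =
      ((cone F (n+2) (by omega)).card : ℝ) := by
    rw [Complex.norm_natCast]
  have h2 : ‖gaussSum (qchar F) χ ^ n‖ = (Fintype.card F : ℝ) ^ e := by
    rw [he]; exact norm_gauss_pow hF hχ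
  rw [h1, h2]
  have hq1 : (1:ℝ) ≤ (Fintype.card F : ℝ) := by
    have := card_F_ge_3 hF; linarith
  have h3 : ‖(if gammaForm F (n+2) (by omega : 3 ≤ n + 2) m = 0
        then (Fintype.card F : ℂ) else 0) - 1‖ =
      (if gammaForm F (n+2) (by omega) m = 0 then (Fintype.card F : ℝ) - 1 else 1) := by
    split_ifs with h
    · rw [show (Fintype.card F : ℂ) - 1 = (((Fintype.card F : ℝ) - 1 : ℝ) : ℂ) by push_cast; ring]
      rw [Complex.norm_real]
      exact abs_of_nonneg (by linarith)
    · simp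
  rw [h3]
  ring

/-- the size of `K(m) = σ^∨(m) − δ₀(m)` for even `d ≥ 4`. -/
theorem statement4 (d : ℕ) (hd : 4 ≤ d) (hde : Even d) :
    ∃ c₁ C₁ c₂ C₂ : ℝ, 0 < c₁ ∧ 0 < C₁ ∧ 0 < c₂ ∧ 0 < C₂ ∧
      ∀ (F : Type) [Field F] [Fintype F] [DecidableEq F], ringChar F ≠ 2 →
        ∀ χ : AddChar F ℂ, (∃ a, χ a ≠ 1) →
          Kfun F d (by omega) χ 0 = 0 ∧
          ∀ m : Fin d → F, m ≠ 0 →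
            ‖Kfun F d (by omega) χ m‖ = ‖sigmaInv F d (by omega) χ m‖ ∧
            (gammaForm F d (by omega) m = 0 →
              c₁ * (Fintype.card F : ℝ) ^ (-(((d : ℝ) - 2) / 2)) ≤
                  ‖Kfun F d (by omega) χ m‖ ∧
                ‖Kfun F d (by omega) χ m‖ ≤
                  C₁ * (Fintype.card F : ℝ) ^ (-(((d : ℝ) - 2) / 2))) ∧
            (gammaForm F d (by omega) m ≠ 0 →
              c₂ * (Fintype.card F : ℝ) ^ (-((d : ℝ) / 2)) ≤
                  ‖Kfun F d (by omega) χ m‖ ∧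
                ‖Kfun F d (by omega) χ m‖ ≤
                  C₂ * (Fintype.card F : ℝ) ^ (-((d : ℝ) / 2))) := by
  refine ⟨1/2, 3/2, 3/4, 3/2, by norm_num, by norm_num, by norm_num, by norm_num, ?_⟩
  intro F _ _ _ hF χ hχex
  have hχ : χ ≠ 1 := AddChar.ne_one_iff.mpr hχex
  obtain ⟨n, rfl⟩ : ∃ n, d = n + 2 := ⟨d - 2, by omega⟩
  have hn : 2 ≤ n := by omega
  have hne : Even n := by
    rcases hde with ⟨k, hk⟩
    exact ⟨k - 1, by omega⟩
  obtain ⟨e, he⟩ := hne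
  have hcpos : 0 < ((cone F (n+2) (by omega)).card : ℝ) := card_cone_pos hn he hF hχ
  have hcC : ((cone F (n+2) (by omega : 3 ≤ n+2)).card : ℂ) ≠ 0 := by
    have h0 : (cone F (n+2) (by omega : 3 ≤ n+2)).card ≠ 0 := by exact_mod_cast ne_of_gt hcpos
    exact_mod_cast h0
  constructor
  · -- K(0) = 0
    unfold Kfun sigmaInv
    rw [if_pos rfl]
    have hlhs : ∑ x ∈ cone F (n+2) (by omega : 3 ≤ n + 2), χ (dotProduct 0 x) =
        ((cone F (n+2) (by omega)).card : ℂ) := by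
      rw [Finset.sum_congr rfl fun x _ => by
        rw [zero_dotProduct, AddChar.map_zero_eq_one]]
      simp
    rw [hlhs, inv_mul_cancel₀ hcC, sub_self]
  · intro m hm
    have hKs : Kfun F (n+2) (by omega) χ m = sigmaInv F (n+2) (by omega) χ m := by
      unfold Kfun; rw [if_neg hm, sub_zero]
    have hnorm := norm_sigmaInv hn he hF hχ hm
    refine ⟨by rw [hKs], ?_, ?_⟩
    all_goals {
    set qR := (Fintype.card F : ℝ) with hqRd
    have hq3 : 3 ≤ qR := card_F_ge_3 hF
    have hq0 : 0 < qR := by linarith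
    obtain ⟨hcl, hcu⟩ := card_cone_bounds hn he hF hχ
    set cR := ((cone F (n+2) (by omega : 3 ≤ n+2)).card : ℝ) with hcRd
    set X := qR ^ e with hXd
    set Y := qR ^ (e+1) with hYd
    have hX : 0 < X := by positivity
    have hY : 0 < Y := by positivity
    have hXY : X * qR = Y := by rw [hXd, hYd]; ring
    have hpow : qR ^ (n+1) = X * Y := by rw [hXd, hYd, he]; ring
    have hcl' : 2/3 * (X * Y) ≤ cR := by rw [← hpow]; exact hcl
    have hcu' : cR ≤ 4/3 * (X * Y) := by rw [← hpow]; exact hcu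
    have hnR : ((n:ℕ) : ℝ) = (e:ℝ) + (e:ℝ) := by exact_mod_cast congrArg (Nat.cast (R := ℝ)) he
    have hexp1 : qR ^ (-(((((n+2:ℕ)) : ℝ) - 2) / 2)) = X⁻¹ := by
      have h1 : (-(((((n+2:ℕ)) : ℝ) - 2) / 2)) = -((e:ℕ) : ℝ) := by
        push_cast
        rw [hnR]
        ring
      rw [h1, Real.rpow_neg (le_of_lt hq0), Real.rpow_natCast, hXd]
    have hexp2 : qR ^ (-(((n+2:ℕ) : ℝ) / 2)) = Y⁻¹ := by
      have h1 : -((((n+2:ℕ)) : ℝ) / 2) = -(((e+1:ℕ)) : ℝ) := by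
        push_cast
        rw [hnR]
        ring
      rw [h1, Real.rpow_neg (le_of_lt hq0), Real.rpow_natCast, hYd]
    first
    | -- Γ(m) = 0 case
      (intro hG
       rw [hKs, hnorm, if_pos hG]
       have hform : cR⁻¹ * X * (qR - 1) = X * (qR - 1) / cR := by
         rw [div_eq_mul_inv]; ring
       constructor
       · rw [hexp1, hform, le_div_iff₀ hcpos]
         calc 1/2 * X⁻¹ * cR ≤ 1/2 * X⁻¹ * (4/3 * (X * Y)) := by
               apply mul_le_mul_of_nonneg_left hcu' (by positivity)
           _ = 2/3 * Y := by field_simp; ring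
           _ ≤ X * (qR - 1) := by
               rw [← hXY]; nlinarith
       · rw [hexp1, hform, div_le_iff₀ hcpos]
         calc X * (qR - 1) ≤ X * qR := by nlinarith
           _ = 3/2 * X⁻¹ * (2/3 * (X * Y)) := by rw [hXY]; field_simp
           _ ≤ 3/2 * X⁻¹ * cR := by
               apply mul_le_mul_of_nonneg_left hcl' (by positivity))
    | -- Γ(m) ≠ 0 case
      (intro hG
       rw [hKs, hnorm, if_neg hG, mul_one]
       have hform : cR⁻¹ * X = X / cR := by rw [div_eq_mul_inv]; ring
       constructor
       · rw [hexp2, hform, le_div_iff₀ hcpos]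
         calc 3/4 * Y⁻¹ * cR ≤ 3/4 * Y⁻¹ * (4/3 * (X * Y)) := by
               apply mul_le_mul_of_nonneg_left hcu' (by positivity)
           _ = X := by field_simp
       · rw [hexp2, hform, div_le_iff₀ hcpos]
         calc X = 3/2 * Y⁻¹ * (2/3 * (X * Y)) := by field_simp
           _ ≤ 3/2 * Y⁻¹ * cR := by
               apply mul_le_mul_of_nonneg_left hcl' (by positivity))
    }


end ConeFF
end
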